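/- For all integers a and b there exist integers x and y such that a·x + b·y = gcd(a,b), |x| ≤ max(|a|,|b|) and |y| ≤ max(|a|,|b|). -/

import Mathlib

/-- Auxiliary: bounded Bézout for `1 ≤ b ≤ a`. -/
lemma bezout_bounded_aux (a b : ℤ) (hb : 1 ≤ b) (hab : b ≤ a) :
    ∃ x y : ℤ, a * x + b * y = Int.gcd a b ∧ |x| ≤ a ∧ |y| ≤ a := by
  set g : ℤ := (Int.gcd a b : ℤ) with hg
  have hgb : g ∣ b := Int.gcd_dvd_right a b
  have hga : g ∣ a := Int.gcd_dvd_left a b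
  have hg1 : 1 ≤ g := by
    have h : 0 < Int.gcd a b := Int.gcd_pos_of_ne_zero_right a (by omega)
    rw [hg]; exact_mod_cast h
  obtain ⟨m, hm⟩ := hgb
  obtain ⟨a', ha'⟩ := hga
  have hm1 : 1 ≤ m := by nlinarith
  have hmb : m ≤ b := by nlinarith
  have hgle : g ≤ b := by nlinarith
  set x₀ : ℤ := Int.gcdA a b
  set y₀ : ℤ := Int.gcdB a b
  have hbez : a * x₀ + b * y₀ = g := (Int.gcd_eq_gcd_ab a b).symm
  set k : ℤ := x₀ / m with hk
  set x : ℤ := x₀ % m with hx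
  have hdm : k * m + x = x₀ := Int.ediv_mul_add_emod x₀ m
  set y : ℤ := y₀ + a' * k with hy
  have heq : a * x + b * y = g := by
    have hthis : a * m = b * a' := by rw [ha', hm]; ring
    linear_combination hbez + a * hdm - k * hthis
  have hx0 : 0 ≤ x := Int.emod_nonneg x₀ (by omega)
  have hxm : x < m := Int.emod_lt_of_pos x₀ (by omega)
  have ha1 : 1 ≤ a := le_trans hb hab
  refine ⟨x, y, heq, ?_, ?_⟩
  · rw [abs_of_nonneg hx0]; omega
  · have hby : b * y = g - a * x := by linarith
    have hy1 : y ≤ 1 := by nlinarith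
    have hyneg : -a ≤ y := by nlinarith
    rw [abs_le]; constructor <;> omega

/-- Auxiliary: bounded Bézout for `0 ≤ b ≤ a`. -/
lemma bezout_bounded_aux2 (a b : ℤ) (hb : 0 ≤ b) (hab : b ≤ a) :
    ∃ x y : ℤ, a * x + b * y = Int.gcd a b ∧ |x| ≤ a ∧ |y| ≤ a := by
  rcases eq_or_lt_of_le hb with hb0 | hb1
  · rcases eq_or_lt_of_le (hb0 ▸ hab : (0:ℤ) ≤ a) with ha0 | ha1
    · exact ⟨0, 0, by simp [← ha0, ← hb0], by simp [← ha0], by simp [← ha0]⟩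
    · refine ⟨1, 0, ?_, by rw [abs_one]; omega, by simp; omega⟩
      rw [← hb0, Int.gcd_zero_right, Int.natCast_natAbs, abs_of_pos ha1]
      ring
  · exact bezout_bounded_aux a b hb1 hab

/-- Auxiliary: bounded Bézout for `0 ≤ a`, `0 ≤ b`. -/
lemma bezout_bounded_aux3 (a b : ℤ) (ha : 0 ≤ a) (hb : 0 ≤ b) :
    ∃ x y : ℤ, a * x + b * y = Int.gcd a b ∧ |x| ≤ max a b ∧ |y| ≤ max a b := by
  rcases le_total b a with h | h
  · obtain ⟨x, y, h1, h2, h3⟩ := bezout_bounded_aux2 a b hb h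
    exact ⟨x, y, h1, le_trans h2 (le_max_left a b), le_trans h3 (le_max_left a b)⟩
  · obtain ⟨x, y, h1, h2, h3⟩ := bezout_bounded_aux2 b a ha h
    refine ⟨y, x, ?_, le_trans h3 (le_max_right a b), le_trans h2 (le_max_right a b)⟩
    rw [Int.gcd_comm]; linarith

/-- **Bounded Bézout (Example 5.2):** for all integers `a, b` there are integers
`x, y` with `a*x + b*y = gcd(a,b)`, `|x| ≤ max |a| |b|` and `|y| ≤ max |a| |b|`. -/
theorem bezout_bounded (a b : ℤ) :
    ∃ x y : ℤ, a * x + b * y = Int.gcd a b ∧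
      |x| ≤ max |a| |b| ∧ |y| ≤ max |a| |b| := by
  obtain ⟨x, y, h1, h2, h3⟩ := bezout_bounded_aux3 |a| |b| (abs_nonneg a) (abs_nonneg b)
  have hgcd : Int.gcd |a| |b| = Int.gcd a b := by
    simp [Int.gcd, Int.natAbs_abs]
  refine ⟨(if 0 ≤ a then x else -x), (if 0 ≤ b then y else -y), ?_, ?_, ?_⟩
  · have hax : a * (if 0 ≤ a then x else -x) = |a| * x := by
      split <;> rename_i h
      · rw [abs_of_nonneg h]
      · rw [abs_of_neg (by omega)]; ring
    have hbx : b * (if 0 ≤ b then y else -y) = |b| * y := by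
      split <;> rename_i h
      · rw [abs_of_nonneg h]
      · rw [abs_of_neg (by omega)]; ring
    rw [hax, hbx, h1, hgcd]
  · split <;> simpa using h2
  · split <;> simpa using h3
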